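/- Let k̄ and k be unit vectors in ℝ³ whose dynamics satisfy d/dt(kᵀk̄) = k_k·|k × k̄|² with k_k > 0. Then the quantity 1 − kᵀk̄ satisfies d/dt(1 − kᵀk̄) = −k_k·(1 − (kᵀk̄)²), and if kᵀk̄(0) > −1 then kᵀk̄(t) → 1 as t → ∞. -/

import Mathlib

open Matrix Filter

lemma lagrange3 (a b : Fin 3 → ℝ) :
    crossProduct a b ⬝ᵥ crossProduct a b = (a ⬝ᵥ a) * (b ⬝ᵥ b) - (a ⬝ᵥ b) ^ 2 := by
  simp [crossProduct, dotProduct, Fin.sum_univ_three]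
  ring

theorem stmt16 (kk : ℝ) (hkk : 0 < kk) (k kb : ℝ → Fin 3 → ℝ)
    (hk : ∀ t, k t ⬝ᵥ k t = 1) (hkb : ∀ t, kb t ⬝ᵥ kb t = 1)
    (hode : ∀ t ≥ (0:ℝ), HasDerivAt (fun s => k s ⬝ᵥ kb s)
      (kk * (crossProduct (k t) (kb t) ⬝ᵥ crossProduct (k t) (kb t))) t) :
    (∀ t ≥ (0:ℝ), HasDerivAt (fun s => 1 - k s ⬝ᵥ kb s)
        (-(kk * (1 - (k t ⬝ᵥ kb t) ^ 2))) t)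
    ∧ (k 0 ⬝ᵥ kb 0 > -1 →
        Tendsto (fun t => k t ⬝ᵥ kb t) atTop (nhds 1)) := by
  set g : ℝ → ℝ := fun s => k s ⬝ᵥ kb s with hg
  have hode' : ∀ t ≥ (0:ℝ), HasDerivAt g (kk * (1 - g t ^ 2)) t := by
    intro t ht
    have := hode t ht
    rwa [lagrange3, hk, hkb, one_mul] at this
  have hsq : ∀ t, g t ^ 2 ≤ 1 := by
    intro t
    have h1 : 0 ≤ crossProduct (k t) (kb t) ⬝ᵥ crossProduct (k t) (kb t) := by
      simp only [dotProduct]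
      exact Finset.sum_nonneg fun i _ => mul_self_nonneg _
    have h2 := lagrange3 (k t) (kb t)
    rw [hk, hkb, one_mul] at h2
    linarith [h2 ▸ h1]
  have hle1 : ∀ t, g t ≤ 1 := fun t => by nlinarith [hsq t]
  have hge1 : ∀ t, -1 ≤ g t := fun t => by nlinarith [hsq t]
  constructor
  · intro t ht
    exact (hode' t ht).const_sub 1
  · intro h0
    -- continuity and derivative facts on Ici 0
    have hcont : ContinuousOn g (Set.Ici 0) := fun t ht =>
      (hode' t ht).continuousAt.continuousWithinAt
    have hdiff : ∀ t ∈ interior (Set.Ici (0:ℝ)), DifferentiableAt ℝ g t := by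
      intro t ht
      rw [interior_Ici] at ht
      exact (hode' t (le_of_lt ht)).differentiableAt
    have hderiv : ∀ t ∈ interior (Set.Ici (0:ℝ)), deriv g t = kk * (1 - g t ^ 2) := by
      intro t ht
      rw [interior_Ici] at ht
      exact (hode' t (le_of_lt ht)).deriv
    have hmono : MonotoneOn g (Set.Ici 0) := by
      apply monotoneOn_of_deriv_nonneg (convex_Ici 0) hcont
      · intro t ht; exact (hdiff t ht).differentiableWithinAt
      · intro t ht
        rw [hderiv t ht]
        have := hsq t
        nlinarith
    rw [Metric.tendsto_atTop]
    intro ε hε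
    -- find T ≥ 0 with g T > 1 - ε
    have hT : ∃ T : ℝ, 0 ≤ T ∧ 1 - ε < g T := by
      by_contra hcon
      push_neg at hcon
      set c : ℝ := kk * (ε * (1 + g 0)) with hc
      have hgpos : -1 < g 0 := h0
      have hcpos : 0 < c := mul_pos hkk (mul_pos hε (by linarith))
      have hbound : ∀ t ∈ interior (Set.Ici (0:ℝ)), c ≤ deriv g t := by
        intro t ht
        rw [hderiv t ht]
        rw [interior_Ici] at ht
        have h1 : g t ≤ 1 - ε := hcon t (le_of_lt ht)
        have h2 : g 0 ≤ g t := hmono Set.self_mem_Ici (Set.mem_Ici.2 (le_of_lt ht)) (le_of_lt ht)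
        have h3 : 1 - g t ^ 2 = (1 - g t) * (1 + g t) := by ring
        have h4 : ε ≤ 1 - g t := by linarith
        have h5 : 1 + g 0 ≤ 1 + g t := by linarith
        have h6 : ε * (1 + g 0) ≤ (1 - g t) * (1 + g t) := by nlinarith
        rw [h3]
        exact mul_le_mul_of_nonneg_left h6 (le_of_lt hkk)
      have hdiffOn : DifferentiableOn ℝ g (interior (Set.Ici (0:ℝ))) :=
        fun t ht => (hdiff t ht).differentiableWithinAt
      have hT0 : (0:ℝ) ≤ 3 / c := by positivity
      have hmvt := (convex_Ici (0:ℝ)).mul_sub_le_image_sub_of_le_deriv hcont hdiffOn hbound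
        0 Set.self_mem_Ici (3 / c) hT0 hT0
      have hgT : g (3 / c) ≤ 1 := hle1 _
      have hg0 : -1 ≤ g 0 := hge1 _
      have hcc : c * (3 / c - 0) = 3 := by field_simp; ring
      rw [hcc] at hmvt
      linarith
    obtain ⟨T, hT0, hTg⟩ := hT
    refine ⟨T, fun t ht => ?_⟩
    have h1 : g T ≤ g t := hmono (Set.mem_Ici.2 hT0) (Set.mem_Ici.2 (le_trans hT0 ht)) ht
    have h2 : g t ≤ 1 := hle1 t
    rw [Real.dist_eq, abs_sub_lt_iff]
    constructor <;> linarith
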